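/- In the formal asymptotic expansion of the penalized system, the order ε⁻¹ equation inside the limiter forces V^{0,+}(t,x) = 0 for all t and all x > 0; consequently, at order ε⁰ in the region x > 0, U^{0,+} satisfies the transport equation ∂_t U^{0,+} + M₀ ∂_x U^{0,+} = S_ũ, and V^{1,+} = M₀ (S_ṽ - ∂_x U^{0,+}). -/

import Mathlib

noncomputable def pdt (f : ℝ → ℝ → ℝ) (t x : ℝ) : ℝ := deriv (fun s => f s x) t
noncomputable def pdx (f : ℝ → ℝ → ℝ) (t x : ℝ) : ℝ := deriv (fun y => f t y) x

/-- In the formal asymptotic expansion inside the limiter (x > 0): the ε⁻¹ equation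
forces V⁰ = 0; consequently, at order ε⁰, U⁰ solves the transport equation
∂_t U⁰ + M₀ ∂_x U⁰ = S_ũ and V¹ = M₀ (S_ṽ - ∂_x U⁰). -/
theorem stmt11 (M₀ : ℝ) (hM₀ : 0 < M₀) (hM₀' : M₀ < 1)
    (U0 V0 V1 Su Sv : ℝ → ℝ → ℝ)
    (hV0diff : ∀ t x, 0 < x → DifferentiableAt ℝ (fun y => V0 t y) x ∧
        DifferentiableAt ℝ (fun s => V0 s x) t)
    -- order ε⁻¹ equation in x > 0:
    (hOrdNeg1 : ∀ t x, 0 < x → V0 t x / M₀ = 0)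
    -- order ε⁰ equations in x > 0:
    (hOrd0u : ∀ t x, 0 < x →
        pdt U0 t x + M₀ * pdx U0 t x + V0 t x * pdx U0 t x + pdx V0 t x = Su t x)
    (hOrd0v : ∀ t x, 0 < x →
        pdt V0 t x + pdx U0 t x + M₀ * pdx V0 t x + V0 t x * pdx V0 t x
          + V1 t x / M₀ = Sv t x) :
    (∀ t x, 0 < x → V0 t x = 0) ∧
    (∀ t x, 0 < x → pdt U0 t x + M₀ * pdx U0 t x = Su t x) ∧
    (∀ t x, 0 < x → V1 t x = M₀ * (Sv t x - pdx U0 t x)) := by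
  have hM : M₀ ≠ 0 := ne_of_gt hM₀
  have hV0 : ∀ t x, 0 < x → V0 t x = 0 := by
    intro t x hx
    have := hOrdNeg1 t x hx
    field_simp at this
    simpa using this
  have hpdx : ∀ t x, 0 < x → pdx V0 t x = 0 := by
    intro t x hx
    have hE : (fun y => V0 t y) =ᶠ[nhds x] (fun _ => 0) := by
      filter_upwards [eventually_gt_nhds hx] with y hy using hV0 t y hy
    rw [pdx, hE.deriv_eq, deriv_const]
  have hpdt : ∀ t x, 0 < x → pdt V0 t x = 0 := by
    intro t x hx
    have : (fun s => V0 s x) = fun _ => 0 := funext fun s => hV0 s x hx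
    rw [pdt, this, deriv_const]
  refine ⟨hV0, ?_, ?_⟩
  · intro t x hx
    have h := hOrd0u t x hx
    rw [hV0 t x hx, hpdx t x hx] at h
    linarith
  · intro t x hx
    have h := hOrd0v t x hx
    rw [hV0 t x hx, hpdx t x hx, hpdt t x hx] at h
    field_simp at h
    linarith
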